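/- (Key computation in the proof of Theorem 1) Suppose a forecaster's predictions μ^τ ∈ Δ(S) are calibrated with respect to Nature's plays y^τ ∈ S, i.e., Σ_{q∈Q^t} |ρ(q,y,t) − q(y)| N(q,t)/t → 0 for all y ∈ S. Let R ⊂ Δ(S) be any subset of possible forecasts. If along a subsequence t_k the total fraction of times forecasts lie in R converges to a positive limit, then the empirical distribution of Nature's plays over the times τ ≤ t_k with μ^τ ∈ R, converges (along a further subsequence) to a point in the closed convex hull of R. -/

import Mathlib

open Finset
open scoped Classical

/-- `Ncount pred q t` : number of steps `τ < t` at which the forecast `pred τ` equals `q`. -/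
noncomputable def Ncount {S : Type*} (pred : ℕ → (S → ℝ)) (q : S → ℝ) (t : ℕ) : ℕ :=
  ((Finset.range t).filter (fun τ => pred τ = q)).card

/-- `rho pred y q s t` : the fraction of the steps `τ < t` with forecast `q` on which
Nature played `s` (zero if `q` was never forecast). -/
noncomputable def rho {S : Type*} (pred : ℕ → (S → ℝ)) (y : ℕ → S) (q : S → ℝ)
    (s : S) (t : ℕ) : ℝ :=
  if Ncount pred q t = 0 then 0
  else (((Finset.range t).filter (fun τ => pred τ = q ∧ y τ = s)).card : ℝ) /
    (Ncount pred q t : ℝ)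

section Aux
variable {S : Type*} [Fintype S] (y : ℕ → S) (pred : ℕ → (S → ℝ)) (R : Set (S → ℝ))

/-- the forecasts in `R` that were used before time `t` -/
noncomputable def QR (t : ℕ) : Finset (S → ℝ) :=
  ((Finset.range t).image pred).filter (fun q => q ∈ R)

lemma Asum (t : ℕ) :
    ((Finset.range t).filter (fun τ => pred τ ∈ R)).card
      = ∑ q ∈ QR pred R t, Ncount pred q t := by
  rw [Finset.card_eq_sum_card_fiberwise
    (f := pred) (t := QR pred R t) (fun τ hτ => by
      simp only [QR, Finset.mem_filter, Finset.mem_image]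
      simp only [Finset.mem_coe, Finset.mem_filter, Finset.mem_image] at hτ ⊢
      exact ⟨⟨τ, hτ.1, rfl⟩, hτ.2⟩)]
  refine Finset.sum_congr rfl (fun q hq => ?_)
  have hqR : q ∈ R := (Finset.mem_filter.mp hq).2
  unfold Ncount
  congr 1
  ext τ
  simp only [Finset.mem_filter]
  constructor
  · rintro ⟨⟨h1, _⟩, h3⟩; exact ⟨h1, h3⟩
  · rintro ⟨h1, h3⟩; exact ⟨⟨h1, h3 ▸ hqR⟩, h3⟩

lemma numsum (s : S) (t : ℕ) :
    ((Finset.range t).filter (fun τ => pred τ ∈ R ∧ y τ = s)).card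
      = ∑ q ∈ QR pred R t, ((Finset.range t).filter (fun τ => pred τ = q ∧ y τ = s)).card := by
  rw [Finset.card_eq_sum_card_fiberwise
    (f := pred) (t := QR pred R t) (fun τ hτ => by
      simp only [QR, Finset.mem_filter, Finset.mem_image]
      simp only [Finset.mem_coe, Finset.mem_filter, Finset.mem_image] at hτ ⊢
      exact ⟨⟨τ, hτ.1, rfl⟩, hτ.2.1⟩)]
  refine Finset.sum_congr rfl (fun q hq => ?_)
  have hqR : q ∈ R := (Finset.mem_filter.mp hq).2
  congr 1
  ext τ
  simp only [Finset.mem_filter]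
  constructor
  · rintro ⟨⟨h1, _, h2⟩, h3⟩; exact ⟨h1, h3, h2⟩
  · rintro ⟨h1, h3, h2⟩; exact ⟨⟨h1, h3 ▸ hqR, h2⟩, h3⟩

lemma rho_mul_N {q : S → ℝ} {t : ℕ} (hq : q ∈ (Finset.range t).image pred) (s : S) :
    rho pred y q s t * (Ncount pred q t : ℝ)
      = (((Finset.range t).filter (fun τ => pred τ = q ∧ y τ = s)).card : ℝ) := by
  obtain ⟨τ, hτ, hpq⟩ := Finset.mem_image.mp hq
  have hN : Ncount pred q t ≠ 0 := by
    have : 0 < Ncount pred q t := by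
      unfold Ncount
      refine Finset.card_pos.mpr ⟨τ, ?_⟩
      simp only [Finset.mem_filter, Finset.mem_range] at hτ ⊢
      exact ⟨hτ, hpq⟩
    omega
  rw [rho, if_neg hN, div_mul_cancel₀ _ (Nat.cast_ne_zero.mpr hN)]
  congr!

end Aux

/-- if the forecasts `pred` are calibrated with respect to Nature's plays `y`,
`R ⊆ Δ(S)` is a set of forecasts, and along a subsequence `tk` the fraction of times the
forecast lies in `R` converges to a positive limit `c`, then along a further subsequence the
empirical distribution of Nature's plays over the times with forecast in `R` converges to a
point in the closed convex hull of `R`. -/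
theorem calibrated_conditional_empirical_to_convex_hull
    {S : Type*} [Fintype S]
    (y : ℕ → S) (pred : ℕ → (S → ℝ)) (hpred : ∀ τ, pred τ ∈ stdSimplex ℝ S)
    (hcal : ∀ s : S, Filter.Tendsto
      (fun t => ∑ q ∈ (Finset.range t).image pred,
        |rho pred y q s t - q s| * (Ncount pred q t : ℝ) / (t : ℝ))
      Filter.atTop (nhds 0))
    (R : Set (S → ℝ)) (hR : R ⊆ stdSimplex ℝ S)
    (tk : ℕ → ℕ) (htk : StrictMono tk) (c : ℝ) (hc : 0 < c)
    (hfrac : Filter.Tendsto (fun k =>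
        (((Finset.range (tk k)).filter (fun τ => pred τ ∈ R)).card : ℝ) / (tk k : ℝ))
      Filter.atTop (nhds c)) :
    ∃ φ : ℕ → ℕ, StrictMono φ ∧ ∃ L ∈ closure (convexHull ℝ R),
      Filter.Tendsto (fun k => (fun s : S =>
          (((Finset.range (tk (φ k))).filter (fun τ => pred τ ∈ R ∧ y τ = s)).card : ℝ) /
            (((Finset.range (tk (φ k))).filter (fun τ => pred τ ∈ R)).card : ℝ)))
        Filter.atTop (nhds L) := by
  classical
  set A : ℕ → ℝ := fun t => (((Finset.range t).filter (fun τ => pred τ ∈ R)).card : ℝ) with hAdef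
  set e : ℕ → S → ℝ := fun t s =>
    (((Finset.range t).filter (fun τ => pred τ ∈ R ∧ y τ = s)).card : ℝ) / A t with hedef
  set v : ℕ → (S → ℝ) :=
    fun t => (QR pred R t).centerMass (fun q => (Ncount pred q t : ℝ)) id with hvdef
  set calS : S → ℕ → ℝ := fun s t => ∑ q ∈ (Finset.range t).image pred,
      |rho pred y q s t - q s| * (Ncount pred q t : ℝ) / (t : ℝ) with hcalSdef
  -- real-valued sum for A
  have hAsum : ∀ t, A t = ∑ q ∈ QR pred R t, (Ncount pred q t : ℝ) := by
    intro t
    show (((Finset.range t).filter (fun τ => pred τ ∈ R)).card : ℝ) = _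
    exact_mod_cast Asum pred R t
  -- v as coordinatewise ratio
  have hvs : ∀ t, 0 < A t → ∀ s, v t s
      = (∑ q ∈ QR pred R t, (Ncount pred q t : ℝ) * q s) / A t := by
    intro t ht s
    rw [hvdef]
    simp only [Finset.centerMass, ← hAsum, Pi.smul_apply, Finset.sum_apply, id_eq,
      smul_eq_mul, div_eq_inv_mul]
  -- e as coordinatewise ratio of sums
  have hes : ∀ t s, e t s = (∑ q ∈ QR pred R t, rho pred y q s t * (Ncount pred q t : ℝ)) / A t := by
    intro t s
    rw [hedef]
    simp only
    congr 1
    rw [numsum y pred R s t]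
    push_cast
    refine Finset.sum_congr rfl (fun q hq => ?_)
    exact (rho_mul_N y pred (Finset.mem_of_mem_filter q hq) s).symm
  -- the key bound
  have hbound : ∀ t : ℕ, 0 < (t : ℝ) → c / 2 * t ≤ A t → ∀ s,
      |e t s - v t s| ≤ 2 / c * calS s t := by
    intro t ht hAt s
    have hA : 0 < A t := lt_of_lt_of_le (by positivity) hAt
    rw [hes t s, hvs t hA s, div_sub_div_same, ← Finset.sum_sub_distrib, abs_div,
      abs_of_pos hA]
    have h1 : |∑ q ∈ QR pred R t, (rho pred y q s t * (Ncount pred q t : ℝ)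
        - (Ncount pred q t : ℝ) * q s)|
        ≤ ∑ q ∈ QR pred R t, |rho pred y q s t - q s| * (Ncount pred q t : ℝ) := by
      refine (Finset.abs_sum_le_sum_abs _ _).trans (Finset.sum_le_sum fun q hq => ?_)
      rw [show rho pred y q s t * (Ncount pred q t : ℝ) - (Ncount pred q t : ℝ) * q s
        = (rho pred y q s t - q s) * (Ncount pred q t : ℝ) by ring, abs_mul,
        abs_of_nonneg (by positivity : (0:ℝ) ≤ (Ncount pred q t : ℝ))]
    have h2 : ∑ q ∈ QR pred R t, |rho pred y q s t - q s| * (Ncount pred q t : ℝ)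
        ≤ ∑ q ∈ (Finset.range t).image pred, |rho pred y q s t - q s| * (Ncount pred q t : ℝ) := by
      refine Finset.sum_le_sum_of_subset_of_nonneg (Finset.filter_subset _ _)
        (fun q _ _ => by positivity)
    have h3 : ∑ q ∈ (Finset.range t).image pred, |rho pred y q s t - q s| * (Ncount pred q t : ℝ)
        = t * calS s t := by
      rw [hcalSdef]
      simp only
      rw [Finset.mul_sum]
      refine Finset.sum_congr rfl (fun q _ => ?_)
      field_simp
    have hcalnn : 0 ≤ calS s t := by
      rw [hcalSdef]
      exact Finset.sum_nonneg (fun q _ => by positivity)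
    calc |∑ q ∈ QR pred R t, (rho pred y q s t * (Ncount pred q t : ℝ)
            - (Ncount pred q t : ℝ) * q s)| / A t
        ≤ (t * calS s t) / A t := by
          gcongr
          exact h1.trans (h2.trans_eq h3)
      _ = (t / A t) * calS s t := by ring
      _ ≤ 2 / c * calS s t := by
          refine mul_le_mul_of_nonneg_right ?_ hcalnn
          rw [div_le_div_iff₀ hA hc]
          nlinarith
  -- eventual positivity along tk
  have hev : ∀ᶠ k in Filter.atTop, c / 2 < A (tk k) / (tk k) :=
    hfrac.eventually (eventually_gt_nhds (by linarith))
  obtain ⟨k0, hk0⟩ := Filter.eventually_atTop.mp hev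
  have hkey : ∀ k, k0 ≤ k → 0 < ((tk k : ℕ) : ℝ) ∧ c / 2 * (tk k) ≤ A (tk k) := by
    intro k hk
    have h := hk0 k hk
    have ht : (0:ℝ) < (tk k : ℝ) := by
      rcases Nat.eq_zero_or_pos (tk k) with h0 | h0
      · exfalso; rw [h0] at h; simp at h; linarith
      · exact_mod_cast h0
    exact ⟨ht, le_of_lt ((lt_div_iff₀ ht).mp h)⟩
  -- compactness of the closed convex hull
  have hKcomp : IsCompact (closure (convexHull ℝ R)) := by
    refine (isCompact_stdSimplex ℝ S).of_isClosed_subset isClosed_closure ?_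
    exact closure_minimal (convexHull_min hR (convex_stdSimplex ℝ S))
      (isCompact_stdSimplex ℝ S).isClosed
  have hvmem : ∀ k, v (tk (k0 + k)) ∈ closure (convexHull ℝ R) := by
    intro k
    apply subset_closure
    have hk := hkey (k0 + k) (Nat.le_add_right _ _)
    have hApos : 0 < A (tk (k0 + k)) := by nlinarith [hk.1, hk.2, hc]
    rw [hvdef]
    refine Finset.centerMass_mem_convexHull _ (fun q _ => by positivity) ?_ (fun q hq => ?_)
    · rw [← hAsum]; exact hApos
    · exact (Finset.mem_filter.mp hq).2
  obtain ⟨L, hL, ψ, hψ, hconv⟩ := hKcomp.tendsto_subseq hvmem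
  refine ⟨fun k => k0 + ψ k, fun a b hab => Nat.add_lt_add_left (hψ hab) k0, L, hL, ?_⟩
  have hgoal : Filter.Tendsto (fun k => e (tk (k0 + ψ k))) Filter.atTop (nhds L) := by
    rw [tendsto_pi_nhds]
    intro s
    have hv' : Filter.Tendsto (fun k => v (tk (k0 + ψ k)) s) Filter.atTop (nhds (L s)) := by
      have := tendsto_pi_nhds.mp hconv s
      simpa [Function.comp] using this
    have hdiff : Filter.Tendsto (fun k => e (tk (k0 + ψ k)) s - v (tk (k0 + ψ k)) s)
        Filter.atTop (nhds 0) := by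
      apply squeeze_zero_norm (a := fun k => 2 / c * calS s (tk (k0 + ψ k)))
      · intro k
        have hk := hkey (k0 + ψ k) (Nat.le_add_right _ _)
        exact hbound _ hk.1 hk.2 s
      · have hmono : StrictMono (fun k => tk (k0 + ψ k)) :=
          htk.comp (fun a b hab => Nat.add_lt_add_left (hψ hab) k0)
        have h0 : Filter.Tendsto (fun k => tk (k0 + ψ k)) Filter.atTop Filter.atTop :=
          hmono.tendsto_atTop
        have h1 := (hcal s).comp h0
        have h2 := h1.const_mul (2 / c)
        simpa [hcalSdef, Function.comp] using h2
    have h3 := hdiff.add hv'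
    simpa using h3
  exact hgoal
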